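/- A prime p satisfies: p is expressible as p = 2b² − a² (with integers a, b) if and only if p is expressible as p = a² − 2b² (with integers a, b); both hold precisely when p = 2 or p ≡ ±1 (mod 8). -/

import Mathlib

lemma dvd_sub_bmod (x : ℤ) (M : ℕ) : (M : ℤ) ∣ x - Int.bmod x M :=
  (Int.ModEq.dvd (show Int.ModEq (M:ℤ) (Int.bmod x M) x from Int.bmod_emod))

lemma sq_eq_two_mul_sq (a b : ℤ) (h : a^2 = 2*b^2) : a = 0 ∧ b = 0 := by
  rcases eq_or_ne b 0 with hb | hb
  · refine ⟨?_, hb⟩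
    have : a^2 = 0 := by rw [h, hb]; ring
    exact pow_eq_zero_iff (n := 2) (by norm_num) |>.mp this
  · exfalso
    have hb' : (b:ℝ) ≠ 0 := Int.cast_ne_zero.mpr hb
    have h2 : ((a:ℝ)/b)^2 = 2 := by
      field_simp
      exact_mod_cast h.trans (mul_comm _ _)
    have hs : Real.sqrt 2 = |(a:ℝ)/b| := by
      rw [← h2, Real.sqrt_sq_eq_abs]
    exact irrational_sqrt_two ⟨|(a:ℚ)/b|, by push_cast [hs]; norm_num⟩

lemma descent (p : ℕ) (hp : p.Prime) :
    ∀ n : ℕ, ∀ m a b : ℤ, m.natAbs = n → m ≠ 0 → m.natAbs < p →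
      a ^ 2 - 2 * b ^ 2 = m * p → ∃ x y : ℤ, x ^ 2 - 2 * y ^ 2 = (p : ℤ) := by
  intro n
  induction n using Nat.strong_induction_on with
  | _ n ih =>
  intro m a b hn hm0 hmp heq
  rcases Nat.lt_or_ge n 2 with hn2 | hn2
  · have hm : m = 1 ∨ m = -1 := by omega
    rcases hm with rfl | rfl
    · exact ⟨a, b, by linarith⟩
    · exact ⟨a + 2*b, a + b, by nlinarith [heq]⟩
  · set M := m.natAbs with hM
    have hM0 : 0 < M := by omega
    set a₁ := Int.bmod a M with ha₁
    set b₁ := Int.bmod b M with hb₁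
    have hda : m ∣ a - a₁ := (Int.natAbs_dvd).mp (dvd_sub_bmod a M)
    have hdb : m ∣ b - b₁ := (Int.natAbs_dvd).mp (dvd_sub_bmod b M)
    have hla := Int.le_bmod (x := a) hM0
    have hua := Int.bmod_lt (x := a) hM0
    have hlb := Int.le_bmod (x := b) hM0
    have hub := Int.bmod_lt (x := b) hM0
    set k : ℤ := (M:ℤ)/2 with hk
    have hba : -k ≤ a₁ ∧ a₁ ≤ k := by constructor <;> omega
    have hbb : -k ≤ b₁ ∧ b₁ ≤ k := by constructor <;> omega
    have hk2 : 2*k ≤ (M:ℤ) := by omega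
    have hk0 : 0 ≤ k := by omega
    have hM2 : 2 ≤ (M:ℤ) := by omega
    have ha2 : a₁^2 ≤ k^2 := by nlinarith [hba.1, hba.2]
    have hb2 : b₁^2 ≤ k^2 := by nlinarith [hbb.1, hbb.2]
    have hsize1 : a₁^2 - 2*b₁^2 < (M:ℤ)^2 := by nlinarith [sq_nonneg b₁]
    have hsize2 : -((M:ℤ)^2) < a₁^2 - 2*b₁^2 := by nlinarith [sq_nonneg a₁]
    have hdab : m ∣ a₁^2 - 2*b₁^2 := by
      have hid : a₁^2 - 2*b₁^2 = (a^2 - 2*b^2) - ((a - a₁)*(a+a₁) - 2*((b-b₁)*(b+b₁))) := by ring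
      rw [hid, heq]
      exact dvd_sub (Dvd.intro _ rfl) (dvd_sub (hda.mul_right _) ((hdb.mul_right _).mul_left 2))
    obtain ⟨r, hr⟩ := hdab
    rcases eq_or_ne r 0 with rfl | hr0
    · have hz := sq_eq_two_mul_sq a₁ b₁ (by linarith [hr])
      have hma : m ∣ a := by have := hda; rw [hz.1, sub_zero] at this; exact this
      have hmb : m ∣ b := by have := hdb; rw [hz.2, sub_zero] at this; exact this
      obtain ⟨u, rfl⟩ := hma
      obtain ⟨v, rfl⟩ := hmb
      have hmp' : m * (m * (u^2 - 2*v^2)) = m * (p:ℤ) := by rw [← heq]; ring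
      have h2 : m * (u^2-2*v^2) = (p:ℤ) := mul_left_cancel₀ hm0 hmp'
      have hdvd : M ∣ p := by
        have h3 : (M:ℤ) ∣ (p:ℤ) := (Int.natAbs_dvd).mpr ⟨u^2-2*v^2, h2.symm⟩
        exact_mod_cast h3
      rcases hp.eq_one_or_self_of_dvd M hdvd with h | h <;> omega
    · have habs : |m| * |r| < (M:ℤ)^2 := by
        rw [← abs_mul, ← hr, abs_lt]
        exact ⟨hsize2, hsize1⟩
      have hm' : |m| = (M:ℤ) := Int.abs_eq_natAbs m
      rw [hm', pow_two] at habs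
      have hrM : |r| < (M:ℤ) := lt_of_mul_lt_mul_left habs (by positivity)
      have hrM' : r.natAbs < M := by
        have : ((r.natAbs : ℤ)) < (M:ℤ) := by rw [← Int.abs_eq_natAbs]; exact hrM
        exact_mod_cast this
      set A := a*a₁ - 2*b*b₁ with hA
      set B := a*b₁ - b*a₁ with hB
      have hdA : m ∣ A := by
        have hid : A = (a^2 - 2*b^2) - (a*(a - a₁) - 2*(b*(b - b₁))) := by rw [hA]; ring
        rw [hid, heq]
        exact dvd_sub (Dvd.intro _ rfl) (dvd_sub (hda.mul_left a) ((hdb.mul_left b).mul_left 2))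
      have hdB : m ∣ B := by
        have hid : B = b*(a - a₁) - a*(b - b₁) := by rw [hB]; ring
        rw [hid]
        exact dvd_sub (hda.mul_left b) (hdb.mul_left a)
      obtain ⟨A', hA'⟩ := hdA
      obtain ⟨B', hB'⟩ := hdB
      have key : m^2 * (r * (p:ℤ)) = m^2 * (A'^2 - 2*B'^2) := by
        have k1 : (m*(p:ℤ)) * (m*r) = A^2 - 2*B^2 := by rw [← heq, ← hr, hA, hB]; ring
        rw [hA', hB'] at k1
        linear_combination k1
      have key3 : A'^2 - 2*B'^2 = r * (p:ℤ) :=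
        (mul_left_cancel₀ (pow_ne_zero 2 hm0) key).symm
      exact ih r.natAbs (hn ▸ hrM') r A' B' rfl hr0 (hrM'.trans hmp) key3

-- existence for p % 8 = 1 or 7
lemma exists_rep (p : ℕ) (hp : p.Prime) (hp2 : p ≠ 2) (h8 : p % 8 = 1 ∨ p % 8 = 7) :
    ∃ x y : ℤ, x ^ 2 - 2 * y ^ 2 = (p : ℤ) := by
  haveI := Fact.mk hp
  obtain ⟨r, hr⟩ := (ZMod.exists_sq_eq_two_iff (p := p) hp2).mpr h8
  set c : ℤ := (r.val : ℤ) with hc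
  have hdvd : (p:ℤ) ∣ c^2 - 2 := by
    have : ((c^2 - 2 : ℤ) : ZMod p) = 0 := by
      push_cast
      simp [hc, ZMod.natCast_val, ZMod.intCast_cast]
      linear_combination -hr
    exact (ZMod.intCast_zmod_eq_zero_iff_dvd _ p).mp this
  have hp0 : 0 < p := hp.pos
  set c₁ := Int.bmod c p with hc₁
  have hdvd1 : (p:ℤ) ∣ c₁^2 - 2 := by
    have h1 : (p:ℤ) ∣ c - c₁ := dvd_sub_bmod c p
    have hid : c₁^2 - 2 = (c^2 - 2) - (c - c₁)*(c + c₁) := by ring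
    rw [hid]
    exact dvd_sub hdvd (h1.mul_right _)
  obtain ⟨m, hm⟩ := hdvd1
  have hl := Int.le_bmod (x := c) hp0
  have hu := Int.bmod_lt (x := c) hp0
  set k : ℤ := (p:ℤ)/2 with hk
  have hbc : -k ≤ c₁ ∧ c₁ ≤ k := by constructor <;> omega
  have hk2 : 2*k ≤ (p:ℤ) := by omega
  have hk0 : 0 ≤ k := by omega
  have hp2' : 2 ≤ (p:ℤ) := by exact_mod_cast hp.two_le
  have hc2 : c₁^2 ≤ k^2 := by nlinarith [hbc.1, hbc.2]
  have hm0 : m ≠ 0 := by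
    rintro rfl
    have : c₁^2 = 2*1^2 := by rw [mul_zero] at hm; nlinarith [hm]
    exact one_ne_zero (sq_eq_two_mul_sq c₁ 1 this).2
  have hmlt : m.natAbs < p := by
    have h1 : (p:ℤ) * |m| < (p:ℤ) * (p:ℤ) := by
      have : |(p:ℤ) * m| < (p:ℤ) * (p:ℤ) := by
        rw [← hm, abs_lt]
        constructor <;> nlinarith
      rwa [abs_mul, abs_of_nonneg (by positivity : (0:ℤ) ≤ (p:ℤ))] at this
    have h2 : |m| < (p:ℤ) := lt_of_mul_lt_mul_left h1 (by positivity)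
    have h3 : ((m.natAbs : ℤ)) < (p:ℤ) := by rw [← Int.abs_eq_natAbs]; exact h2
    exact_mod_cast h3
  exact descent p hp m.natAbs m c₁ 1 rfl hm0 hmlt (by linear_combination hm)

-- necessity mod 8
lemma rep_mod8 (p : ℕ) (hp : p.Prime) (a b : ℤ) (h : (p:ℤ) = a^2 - 2*b^2) :
    p = 2 ∨ p % 8 = 1 ∨ p % 8 = 7 := by
  by_contra hcon
  push_neg at hcon
  obtain ⟨hne2, h1, h7⟩ := hcon
  have hodd : p % 2 = 1 := hp.eq_two_or_odd.resolve_left hne2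
  have hcase : p % 8 = 3 ∨ p % 8 = 5 := by omega
  have h8' : ((a : ZMod 8))^2 - 2*(b:ZMod 8)^2 = ((p:ℕ) : ZMod 8) := by
    have h2 := congrArg (fun z : ℤ => (z : ZMod 8)) h
    push_cast at h2
    exact h2.symm
  have hval : ((p : ℕ) : ZMod 8) = ((p % 8 : ℕ) : ZMod 8) := (ZMod.natCast_mod p 8).symm
  have hdec : ∀ x y : ZMod 8, ¬(x^2 - 2*y^2 = 3) ∧ ¬(x^2-2*y^2 = 5) := by decide
  rcases hcase with hc | hc
  · exact (hdec a b).1 (by rw [h8', hval, hc]; decide)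
  · exact (hdec a b).2 (by rw [h8', hval, hc]; decide)

theorem stmt_9 (p : ℕ) (hp : p.Prime) :
    ((∃ a b : ℤ, (p : ℤ) = 2 * b ^ 2 - a ^ 2) ↔
      (∃ a b : ℤ, (p : ℤ) = a ^ 2 - 2 * b ^ 2)) ∧
    ((∃ a b : ℤ, (p : ℤ) = 2 * b ^ 2 - a ^ 2) ↔
      (p = 2 ∨ p % 8 = 1 ∨ p % 8 = 7)) := by
  have flipL : ∀ q : ℤ, (∃ a b : ℤ, q = 2 * b ^ 2 - a ^ 2) ↔ (∃ a b : ℤ, q = a ^ 2 - 2 * b ^ 2) := by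
    intro q
    constructor
    · rintro ⟨a, b, h⟩
      exact ⟨a + 2*b, a + b, by linear_combination h⟩
    · rintro ⟨a, b, h⟩
      exact ⟨a + 2*b, a + b, by linear_combination h⟩
  refine ⟨flipL p, (flipL p).trans ?_⟩
  constructor
  · rintro ⟨a, b, h⟩
    exact rep_mod8 p hp a b h
  · rintro (rfl | h8)
    · exact ⟨2, 1, by norm_num⟩
    · have hne2 : p ≠ 2 := by rintro rfl; omega
      obtain ⟨x, y, hxy⟩ := exists_rep p hp hne2 h8
      exact ⟨x, y, hxy.symm⟩
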